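/- Let p₁ ≠ p₂ be primes and let G = P₁ × P₂, where P_i is a non-trivial finite p_i-group of exponent p_i for i = 1, 2. Then a non-identity element of G is a non-isolated vertex of P_E(G) − P(G) if and only if its order is p₁ or p₂, and two such vertices are adjacent in D(G) if and only if one has order p₁ and the other has order p₂; consequently the difference graph D(G) is the complete bipartite graph K_{|P₁|−1, |P₂|−1}. -/

import Mathlib

/-- Adjacency in the power graph `P(G)`: distinct `a`, `b` are adjacent iff one is a
power of the other. -/
def powAdj {G : Type*} [Group G] (a b : G) : Prop :=
  a ≠ b ∧ (a ∈ Subgroup.zpowers b ∨ b ∈ Subgroup.zpowers a)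

/-- Adjacency in the enhanced power graph `P_E(G)`: distinct `a`, `b` are adjacent iff
both are powers of a common element `c`. -/
def enhAdj {G : Type*} [Group G] (a b : G) : Prop :=
  a ≠ b ∧ ∃ c : G, a ∈ Subgroup.zpowers c ∧ b ∈ Subgroup.zpowers c

/-- Adjacency in the difference graph `D(G) = P_E(G) − P(G)`: adjacent in the enhanced
power graph but not in the power graph. -/
def diffAdj {G : Type*} [Group G] (a b : G) : Prop :=
  enhAdj a b ∧ ¬ powAdj a b

/-- In a finite group, if `g, h` lie in the cyclic subgroup generated by `c`
and `orderOf h ∣ orderOf g`, then `h ∈ ⟨g⟩`. -/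
lemma aux_mem_zpowers_of_orderOf_dvd {G : Type*} [Group G] [Finite G] {c g h : G}
    (hg : g ∈ Subgroup.zpowers c) (hh : h ∈ Subgroup.zpowers c)
    (hd : orderOf h ∣ orderOf g) : h ∈ Subgroup.zpowers g := by
  obtain ⟨m, rfl⟩ := (Submonoid.mem_powers_iff _ _).mp (mem_powers_iff_mem_zpowers.mpr hg)
  obtain ⟨k, rfl⟩ := (Submonoid.mem_powers_iff _ _).mp (mem_powers_iff_mem_zpowers.mpr hh)
  set n := orderOf c with hn
  have hnpos : 0 < n := orderOf_pos c
  rw [orderOf_pow, orderOf_pow] at hd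
  set a := Nat.gcd n m with ha
  set b := Nat.gcd n k with hb
  have han : a ∣ n := Nat.gcd_dvd_left _ _
  have hbn : b ∣ n := Nat.gcd_dvd_left _ _
  have hab : a ∣ b := by
    obtain ⟨t, ht⟩ := hd
    have hnb : 0 < n / b := Nat.div_pos (Nat.le_of_dvd hnpos hbn)
      (Nat.pos_of_dvd_of_pos hbn hnpos)
    refine ⟨t, Nat.eq_of_mul_eq_mul_right hnb ?_⟩
    have h1 : a * (n / a) = n := Nat.mul_div_cancel' han
    have h2 : b * (n / b) = n := Nat.mul_div_cancel' hbn
    calc b * (n / b) = a * (n / a) := by rw [h1, h2]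
      _ = a * (n / b * t) := by rw [← ht]
      _ = a * t * (n / b) := by ring
  have hak : a ∣ k := hab.trans (Nat.gcd_dvd_right _ _)
  have hca : c ^ a ∈ Subgroup.zpowers (c ^ m) := by
    refine Subgroup.mem_zpowers_iff.mpr ⟨Nat.gcdB n m, ?_⟩
    have hbez : (a : ℤ) = n * Nat.gcdA n m + m * Nat.gcdB n m := Nat.gcd_eq_gcd_ab n m
    have h0 : c ^ ((n : ℤ) * Nat.gcdA n m) = 1 := by
      rw [zpow_mul, zpow_natCast, hn, pow_orderOf_eq_one, one_zpow]
    calc (c ^ m) ^ Nat.gcdB n m = c ^ ((m : ℤ) * Nat.gcdB n m) := by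
          rw [← zpow_natCast c m, ← zpow_mul]
      _ = c ^ ((n : ℤ) * Nat.gcdA n m) * c ^ ((m : ℤ) * Nat.gcdB n m) := by rw [h0, one_mul]
      _ = c ^ ((n : ℤ) * Nat.gcdA n m + (m : ℤ) * Nat.gcdB n m) := (zpow_add c _ _).symm
      _ = c ^ ((a : ℤ)) := by rw [hbez]
      _ = c ^ a := zpow_natCast c a
  obtain ⟨s, hs⟩ := hak
  have hck : c ^ k = (c ^ a) ^ s := by rw [← pow_mul, ← hs]
  rw [hck]
  exact Subgroup.pow_mem _ hca s

/-- `diffAdj` is symmetric. -/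
lemma aux_diffAdj_symm {G : Type*} [Group G] {a b : G} (h : diffAdj a b) : diffAdj b a := by
  obtain ⟨⟨hab, c, h1, h2⟩, hnp⟩ := h
  exact ⟨⟨hab.symm, c, h2, h1⟩, fun hp => hnp ⟨hp.1.symm, hp.2.symm⟩⟩

/-- Let p₁ ≠ p₂ be primes and let G = P₁ × P₂, where P_i is a
non-trivial finite p_i-group of exponent p_i for i = 1, 2. Then a non-identity
element of G is a non-isolated vertex of P_E(G) − P(G) if and only if its order is p₁
or p₂, and two such vertices are adjacent in D(G) if and only if one has order p₁ and
the other has order p₂; consequently the difference graph D(G) is the complete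
bipartite graph K_{|P₁|−1, |P₂|−1} (the two parts having |P₁|−1 and |P₂|−1
elements). -/
theorem diffGraph_prod_prime_exponent_complete_bipartite
    {P₁ P₂ : Type*} [Group P₁] [Group P₂] [Finite P₁] [Finite P₂]
    [Nontrivial P₁] [Nontrivial P₂]
    (p₁ p₂ : ℕ) (hp₁ : p₁.Prime) (hp₂ : p₂.Prime) (hne : p₁ ≠ p₂)
    (h₁ : IsPGroup p₁ P₁) (h₂ : IsPGroup p₂ P₂)
    (he₁ : Monoid.exponent P₁ = p₁) (he₂ : Monoid.exponent P₂ = p₂) :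
    (∀ g : P₁ × P₂, g ≠ 1 →
        ((∃ h : P₁ × P₂, diffAdj g h) ↔ orderOf g = p₁ ∨ orderOf g = p₂)) ∧
      (∀ g h : P₁ × P₂, g ≠ 1 → h ≠ 1 →
        (diffAdj g h ↔
          (orderOf g = p₁ ∧ orderOf h = p₂) ∨ (orderOf g = p₂ ∧ orderOf h = p₁))) ∧
      Nat.card {g : P₁ × P₂ // orderOf g = p₁} = Nat.card P₁ - 1 ∧
      Nat.card {g : P₁ × P₂ // orderOf g = p₂} = Nat.card P₂ - 1 := by
  classical
  have hcop : Nat.Coprime p₁ p₂ := (Nat.coprime_primes hp₁ hp₂).mpr hne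
  have hoa : ∀ a : P₁, orderOf a = 1 ∨ orderOf a = p₁ := fun a =>
    hp₁.eq_one_or_self_of_dvd _ (he₁ ▸ Monoid.order_dvd_exponent a)
  have hob : ∀ b : P₂, orderOf b = 1 ∨ orderOf b = p₂ := fun b =>
    hp₂.eq_one_or_self_of_dvd _ (he₂ ▸ Monoid.order_dvd_exponent b)
  -- characterization of elements of order p₁ and p₂
  have hchar₁ : ∀ g : P₁ × P₂, orderOf g = p₁ ↔ (g.1 ≠ 1 ∧ g.2 = 1) := by
    intro g
    rw [Prod.orderOf]
    rcases hoa g.1 with e1 | e1 <;> rcases hob g.2 with e2 | e2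
    · simp [e1, e2, orderOf_eq_one_iff.mp e1, (hp₁.one_lt.ne : 1 ≠ p₁)]
    · have hg2 : g.2 ≠ 1 := fun e => hp₂.ne_one (by rw [e, orderOf_one] at e2; exact e2.symm)
      simp [e1, e2, hg2, (Ne.symm hne : p₂ ≠ p₁)]
    · have hg1 : g.1 ≠ 1 := fun e => hp₁.ne_one (by rw [e, orderOf_one] at e1; exact e1.symm)
      simp [e1, e2, hg1, orderOf_eq_one_iff.mp e2]
    · have hg2 : g.2 ≠ 1 := fun e => hp₂.ne_one (by rw [e, orderOf_one] at e2; exact e2.symm)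
      have hmul : Nat.lcm p₁ p₂ = p₁ * p₂ := hcop.lcm_eq_mul
      have hneq : p₁ * p₂ ≠ p₁ := fun e => hp₂.ne_one
        (Nat.eq_of_mul_eq_mul_left hp₁.pos (by rw [e, mul_one]))
      simp [e1, e2, hmul, hneq, hg2]
  have hchar₂ : ∀ g : P₁ × P₂, orderOf g = p₂ ↔ (g.2 ≠ 1 ∧ g.1 = 1) := by
    intro g
    rw [Prod.orderOf]
    rcases hoa g.1 with e1 | e1 <;> rcases hob g.2 with e2 | e2
    · simp [e1, e2, orderOf_eq_one_iff.mp e2, (hp₂.one_lt.ne : 1 ≠ p₂)]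
    · have hg2 : g.2 ≠ 1 := fun e => hp₂.ne_one (by rw [e, orderOf_one] at e2; exact e2.symm)
      simp [e1, e2, hg2, orderOf_eq_one_iff.mp e1]
    · have hg1 : g.1 ≠ 1 := fun e => hp₁.ne_one (by rw [e, orderOf_one] at e1; exact e1.symm)
      simp [e1, e2, hg1, hne]
    · have hg1 : g.1 ≠ 1 := fun e => hp₁.ne_one (by rw [e, orderOf_one] at e1; exact e1.symm)
      have hmul : Nat.lcm p₁ p₂ = p₁ * p₂ := hcop.lcm_eq_mul
      have hneq : p₁ * p₂ ≠ p₂ := fun e => hp₁.ne_one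
        (Nat.eq_of_mul_eq_mul_right hp₂.pos (by rw [e, one_mul]))
      simp [e1, e2, hmul, hneq, hg1]
  -- every order divides p₁ * p₂
  have hdvd_all : ∀ g : P₁ × P₂, orderOf g ∣ p₁ * p₂ := by
    intro g
    rw [Prod.orderOf]
    exact Nat.lcm_dvd ((he₁ ▸ Monoid.order_dvd_exponent g.1).trans (dvd_mul_right p₁ p₂))
      ((he₂ ▸ Monoid.order_dvd_exponent g.2).trans (dvd_mul_left p₂ p₁))
  -- classification of orders of nontrivial elements
  have hclass : ∀ g : P₁ × P₂, g ≠ 1 →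
      orderOf g = p₁ ∨ orderOf g = p₂ ∨ orderOf g = p₁ * p₂ := by
    intro g hg
    have hd := hdvd_all g
    have hne1 : orderOf g ≠ 1 := fun e => hg (orderOf_eq_one_iff.mp e)
    by_cases hd1 : p₁ ∣ orderOf g <;> by_cases hd2 : p₂ ∣ orderOf g
    · exact Or.inr (Or.inr (Nat.dvd_antisymm hd (hcop.mul_dvd_of_dvd_of_dvd hd1 hd2)))
    · have hc : Nat.Coprime (orderOf g) p₂ :=
        ((hp₂.coprime_iff_not_dvd).mpr hd2).symm
      exact Or.inl (Nat.dvd_antisymm (hc.dvd_of_dvd_mul_right hd) hd1)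
    · have hc : Nat.Coprime (orderOf g) p₁ :=
        ((hp₁.coprime_iff_not_dvd).mpr hd1).symm
      have : orderOf g ∣ p₂ := hc.dvd_of_dvd_mul_left hd
      exact Or.inr (Or.inl (Nat.dvd_antisymm this hd2))
    · exfalso
      have hc : Nat.Coprime (orderOf g) p₂ :=
        ((hp₂.coprime_iff_not_dvd).mpr hd2).symm
      rcases hp₁.eq_one_or_self_of_dvd _ (hc.dvd_of_dvd_mul_right hd) with e | e
      · exact hne1 e
      · exact hd1 (e ▸ dvd_refl _)
  -- forward direction of the adjacency characterization
  have hfwd : ∀ g h : P₁ × P₂, g ≠ 1 → h ≠ 1 → diffAdj g h →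
      (orderOf g = p₁ ∧ orderOf h = p₂) ∨ (orderOf g = p₂ ∧ orderOf h = p₁) := by
    rintro g h hg hh ⟨⟨hgh, c, hgc, hhc⟩, hnp⟩
    have hnd1 : ¬ orderOf h ∣ orderOf g := fun hd =>
      hnp ⟨hgh, Or.inr (aux_mem_zpowers_of_orderOf_dvd hgc hhc hd)⟩
    have hnd2 : ¬ orderOf g ∣ orderOf h := fun hd =>
      hnp ⟨hgh, Or.inl (aux_mem_zpowers_of_orderOf_dvd hhc hgc hd)⟩
    rcases hclass g hg with e1 | e1 | e1 <;> rcases hclass h hh with e2 | e2 | e2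
    · exact absurd (dvd_of_eq (e2.trans e1.symm)) hnd1
    · exact Or.inl ⟨e1, e2⟩
    · exact absurd (by rw [e1, e2]; exact dvd_mul_right p₁ p₂) hnd2
    · exact Or.inr ⟨e1, e2⟩
    · exact absurd (dvd_of_eq (e2.trans e1.symm)) hnd1
    · exact absurd (by rw [e1, e2]; exact dvd_mul_left p₂ p₁) hnd2
    · exact absurd (by rw [e1, e2]; exact dvd_mul_right p₁ p₂) hnd1
    · exact absurd (by rw [e1, e2]; exact dvd_mul_left p₂ p₁) hnd1
    · exact absurd (dvd_of_eq (e2.trans e1.symm)) hnd1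
  -- backward direction: elements of orders p₁ and p₂ are adjacent in D(G)
  have hbwd : ∀ g h : P₁ × P₂, orderOf g = p₁ → orderOf h = p₂ → diffAdj g h := by
    intro g h hgo hho
    obtain ⟨hg1, hg2⟩ := (hchar₁ g).mp hgo
    obtain ⟨hh2, hh1⟩ := (hchar₂ h).mp hho
    have hgho : g ≠ h := fun e => hne (by rw [← hgo, e, hho])
    have hog1 : orderOf g.1 = p₁ :=
      (hoa g.1).resolve_left (fun e => hg1 (orderOf_eq_one_iff.mp e))
    have hoh2 : orderOf h.2 = p₂ :=
      (hob h.2).resolve_left (fun e => hh2 (orderOf_eq_one_iff.mp e))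
    set c : P₁ × P₂ := (g.1, h.2) with hc
    obtain ⟨x, -, hx⟩ := Nat.exists_mul_mod_eq_one_of_coprime hcop.symm hp₁.one_lt
    obtain ⟨y, -, hy⟩ := Nat.exists_mul_mod_eq_one_of_coprime hcop hp₂.one_lt
    have hgmem : g ∈ Subgroup.zpowers c := by
      have e2 : h.2 ^ (p₂ * x) = 1 :=
        orderOf_dvd_iff_pow_eq_one.mp (hoh2 ▸ dvd_mul_right p₂ x)
      have e1 : g.1 ^ (p₂ * x) = g.1 := by
        conv_rhs => rw [← pow_one g.1]
        rw [pow_eq_pow_iff_modEq, hog1]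
        show (p₂ * x) % p₁ = 1 % p₁
        rw [hx, Nat.mod_eq_of_lt hp₁.one_lt]
      have : c ^ (p₂ * x) = g := by
        have hpow : c ^ (p₂ * x) = (g.1 ^ (p₂ * x), h.2 ^ (p₂ * x)) := rfl
        rw [hpow, e1, e2, ← hg2]
      rw [← this]
      exact Subgroup.pow_mem _ (Subgroup.mem_zpowers c) _
    have hhmem : h ∈ Subgroup.zpowers c := by
      have e1 : g.1 ^ (p₁ * y) = 1 :=
        orderOf_dvd_iff_pow_eq_one.mp (hog1 ▸ dvd_mul_right p₁ y)
      have e2 : h.2 ^ (p₁ * y) = h.2 := by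
        conv_rhs => rw [← pow_one h.2]
        rw [pow_eq_pow_iff_modEq, hoh2]
        show (p₁ * y) % p₂ = 1 % p₂
        rw [hy, Nat.mod_eq_of_lt hp₂.one_lt]
      have : c ^ (p₁ * y) = h := by
        have hpow : c ^ (p₁ * y) = (g.1 ^ (p₁ * y), h.2 ^ (p₁ * y)) := rfl
        rw [hpow, e1, e2, ← hh1]
      rw [← this]
      exact Subgroup.pow_mem _ (Subgroup.mem_zpowers c) _
    refine ⟨⟨hgho, c, hgmem, hhmem⟩, ?_⟩
    rintro ⟨-, hm | hm⟩
    · have hd := orderOf_dvd_of_mem_zpowers hm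
      rw [hgo, hho] at hd
      exact hne ((Nat.prime_dvd_prime_iff_eq hp₁ hp₂).mp hd)
    · have hd := orderOf_dvd_of_mem_zpowers hm
      rw [hgo, hho] at hd
      exact hne (((Nat.prime_dvd_prime_iff_eq hp₂ hp₁).mp hd).symm)
  refine ⟨?_, ?_, ?_, ?_⟩
  · -- existence of a neighbour iff order is p₁ or p₂
    intro g hg
    constructor
    · rintro ⟨h, hd⟩
      have hh1 : h ≠ 1 := by
        rintro rfl
        exact hd.2 ⟨hd.1.1, Or.inr (Subgroup.one_mem _)⟩
      rcases hfwd g h hg hh1 hd with ⟨e, -⟩ | ⟨e, -⟩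
      · exact Or.inl e
      · exact Or.inr e
    · rintro (e | e)
      · obtain ⟨b, hb⟩ := exists_ne (1 : P₂)
        exact ⟨(1, b), hbwd g (1, b) e ((hchar₂ _).mpr ⟨hb, rfl⟩)⟩
      · obtain ⟨a, ha⟩ := exists_ne (1 : P₁)
        exact ⟨(a, 1), aux_diffAdj_symm
          (hbwd (a, 1) g ((hchar₁ _).mpr ⟨ha, rfl⟩) e)⟩
  · -- pairwise adjacency characterization
    intro g h hg hh
    refine ⟨hfwd g h hg hh, ?_⟩
    rintro (⟨e1, e2⟩ | ⟨e1, e2⟩)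
    · exact hbwd g h e1 e2
    · exact aux_diffAdj_symm (hbwd h g e2 e1)
  · -- counting elements of order p₁
    have e : {g : P₁ × P₂ // orderOf g = p₁} ≃ {a : P₁ // ¬ a = 1} :=
      { toFun := fun g => ⟨g.1.1, ((hchar₁ g.1).mp g.2).1⟩
        invFun := fun a => ⟨(a.1, 1), (hchar₁ _).mpr ⟨a.2, rfl⟩⟩
        left_inv := fun g => Subtype.ext (Prod.ext rfl ((hchar₁ g.1).mp g.2).2.symm)
        right_inv := fun a => rfl }
    rw [Nat.card_congr e]
    letI : Fintype P₁ := Fintype.ofFinite P₁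
    rw [Nat.card_eq_fintype_card, Nat.card_eq_fintype_card,
      Fintype.card_subtype_compl, Fintype.card_subtype_eq]
  · -- counting elements of order p₂
    have e : {g : P₁ × P₂ // orderOf g = p₂} ≃ {b : P₂ // ¬ b = 1} :=
      { toFun := fun g => ⟨g.1.2, ((hchar₂ g.1).mp g.2).1⟩
        invFun := fun b => ⟨(1, b.1), (hchar₂ _).mpr ⟨b.2, rfl⟩⟩
        left_inv := fun g => Subtype.ext (Prod.ext ((hchar₂ g.1).mp g.2).2.symm rfl)
        right_inv := fun b => rfl }
    rw [Nat.card_congr e]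
    letI : Fintype P₂ := Fintype.ofFinite P₂
    rw [Nat.card_eq_fintype_card, Nat.card_eq_fintype_card,
      Fintype.card_subtype_compl, Fintype.card_subtype_eq]
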